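/- If T is an affine operator whose range contains the Frank-and-Wolfe set F, then T⁻¹(F) is a Frank-and-Wolfe set. -/

import Mathlib

open Pointwise

noncomputable section

/-- A quadratic function on a real vector space. -/
def IsQuadratic {E : Type*} [AddCommGroup E] [Module ℝ E] (f : E → ℝ) : Prop :=
  ∃ (B : E →ₗ[ℝ] E →ₗ[ℝ] ℝ) (l : E →ₗ[ℝ] ℝ) (c : ℝ), ∀ x, f x = B x x + l x + c

/-- A Frank-and-Wolfe set: every quadratic function bounded below on `F`
attains its infimum on `F`. -/
def IsFWSet {E : Type*} [AddCommGroup E] [Module ℝ E] (F : Set E) : Prop :=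
  ∀ f : E → ℝ, IsQuadratic f → BddBelow (f '' F) →
    ∃ x₀ ∈ F, ∀ x ∈ F, f x₀ ≤ f x

open RealInnerProductSpace

private lemma lin_coeff_zero' {b c0 m : ℝ} (h : ∀ t : ℝ, m ≤ b*t + c0) : b = 0 := by
  by_contra hb
  have := h ((m - c0 - 1)/b)
  rw [mul_div_cancel₀ _ hb] at this
  linarith

private lemma quad_coeff_nonneg' {a b c0 m : ℝ} (h : ∀ t : ℝ, m ≤ a*t^2 + b*t + c0) :
    0 ≤ a := by
  by_contra ha
  push_neg at ha
  have hc : m ≤ c0 := by have := h 0; simpa using this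
  set t := Real.sqrt ((c0 - m + 1)/(-a)) with ht
  have harg : 0 ≤ (c0 - m + 1)/(-a) := div_nonneg (by linarith) (by linarith)
  have ht2 : t^2 = (c0 - m + 1)/(-a) := Real.sq_sqrt harg
  have h1 := h t
  have h2 := h (-t)
  have hat : a * t^2 = -(c0 - m + 1) := by
    rw [ht2, mul_div_assoc', div_eq_iff (show (-a) ≠ 0 by linarith)]; ring
  nlinarith

private lemma exists_pinv' {E F : Type*} [NormedAddCommGroup E] [InnerProductSpace ℝ E]
    [NormedAddCommGroup F] [InnerProductSpace ℝ F]
    [FiniteDimensional ℝ E] [FiniteDimensional ℝ F] (W : E →ₗ[ℝ] F) :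
    ∃ S : F →ₗ[ℝ] E, (∀ y ∈ LinearMap.range W, W (S y) = y) ∧
      ∀ y, S y ∈ (LinearMap.ker W)ᗮ := by
  set U := (LinearMap.ker W)ᗮ with hU
  have he : ∀ u : U, W u ∈ LinearMap.range W := fun u => ⟨u, rfl⟩
  set e : U →ₗ[ℝ] LinearMap.range W :=
    LinearMap.codRestrict (LinearMap.range W) (W ∘ₗ U.subtype) (fun u => he u) with hedef
  have hinj : Function.Injective e := by
    intro u u' huv
    have hW : W u = W u' := congrArg Subtype.val huv
    have hmem : ((u:E) - u') ∈ LinearMap.ker W := by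
      simp [LinearMap.mem_ker, map_sub, hW]
    have hmem2 : ((u : E) - u') ∈ U := sub_mem u.2 u'.2
    have h0 : ((u:E) - u') = 0 :=
      inner_self_eq_zero.mp ((Submodule.mem_orthogonal _ _).mp hmem2 _ hmem)
    exact Subtype.ext (sub_eq_zero.mp h0)
  have hsurj : Function.Surjective e := by
    rintro ⟨y, x, rfl⟩
    refine ⟨⟨(Submodule.orthogonalProjection U x : E), (Submodule.orthogonalProjection U x).2⟩, ?_⟩
    apply Subtype.ext
    have hdiff : x - (Submodule.orthogonalProjection U x : E) ∈ Uᗮ :=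
      Submodule.sub_starProjection_mem_orthogonal x
    have hker : x - (Submodule.orthogonalProjection U x : E) ∈ LinearMap.ker W := by
      simpa [hU, Submodule.orthogonal_orthogonal] using hdiff
    have hWx : W x - W (Submodule.orthogonalProjection U x : E) = 0 := by
      rw [← map_sub]; exact hker
    exact (sub_eq_zero.mp hWx).symm
  set eq := LinearEquiv.ofBijective e ⟨hinj, hsurj⟩ with heq
  refine ⟨U.subtype ∘ₗ (eq.symm : LinearMap.range W →ₗ[ℝ] U) ∘ₗ
    (Submodule.orthogonalProjection (LinearMap.range W)).toLinearMap, ?_, ?_⟩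
  · intro y hy
    have hproj : (Submodule.orthogonalProjection (LinearMap.range W) y : F) = y :=
      Submodule.starProjection_eq_self_iff.mpr hy
    have hkey : ∀ p : LinearMap.range W, W (U.subtype (eq.symm p)) = p := by
      intro p
      have h2 : e (eq.symm p) = p := eq.apply_symm_apply p
      have := congrArg Subtype.val h2
      exact this
    have := hkey (Submodule.orthogonalProjection (LinearMap.range W) y)
    simpa [hproj] using this
  · intro y
    exact (eq.symm _).2

private lemma IsQuadratic.comp_affine' {E F : Type*} [AddCommGroup E] [Module ℝ E]
    [AddCommGroup F] [Module ℝ F] {f : E → ℝ} (hf : IsQuadratic f)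
    (G : F →ₗ[ℝ] E) (d : E) : IsQuadratic fun y => f (G y + d) := by
  obtain ⟨B, l, c, h⟩ := hf
  refine ⟨B.compl₁₂ G G, ((B.flip d).comp G) + ((B d).comp G) + l.comp G,
    B d d + l d + c, fun y => ?_⟩
  simp [h, LinearMap.compl₁₂_apply, map_add]
  ring

private lemma symm_orth_ker_le_range' {E : Type*} [NormedAddCommGroup E]
    [InnerProductSpace ℝ E] [FiniteDimensional ℝ E] (C : E →ₗ[ℝ] E)
    (hsym : ∀ x y, ⟪C x, y⟫ = ⟪x, C y⟫) :
    (LinearMap.ker C)ᗮ ≤ LinearMap.range C := by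
  have hle : LinearMap.range C ≤ (LinearMap.ker C)ᗮ := by
    rintro _ ⟨x, rfl⟩
    rw [Submodule.mem_orthogonal]
    intro u hu
    have : ⟪C x, u⟫ = 0 := by rw [hsym]; simp [LinearMap.mem_ker.mp hu]
    rwa [real_inner_comm] at this
  have hdim : Module.finrank ℝ (LinearMap.range C) =
      Module.finrank ℝ ((LinearMap.ker C)ᗮ) := by
    have h1 := LinearMap.finrank_range_add_finrank_ker C
    have h2 := Submodule.finrank_add_finrank_orthogonal (K := LinearMap.ker C)
    omega
  rw [Submodule.eq_of_le_of_finrank_eq hle hdim]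

private lemma exists_repr' {E : Type*} [NormedAddCommGroup E] [InnerProductSpace ℝ E]
    [FiniteDimensional ℝ E] (B : E →ₗ[ℝ] E →ₗ[ℝ] ℝ) :
    ∃ A : E →ₗ[ℝ] E, ∀ x y, ⟪A y, x⟫ = B x y := by
  refine ⟨LinearMap.mk (AddHom.mk (fun y => (InnerProductSpace.toDual ℝ _).symm
      (LinearMap.toContinuousLinearMap (B.flip y)))
      (by intros; simp [map_add])) (by intros; simp), ?_⟩
  intro x y
  simp [InnerProductSpace.toDual_symm_apply]

private lemma exists_riesz' {E : Type*} [NormedAddCommGroup E] [InnerProductSpace ℝ E]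
    [FiniteDimensional ℝ E] (l : E →ₗ[ℝ] ℝ) : ∃ v : E, ∀ x, ⟪v, x⟫ = l x := by
  refine ⟨(InnerProductSpace.toDual ℝ _).symm (LinearMap.toContinuousLinearMap l), ?_⟩
  intro x
  simp [InnerProductSpace.toDual_symm_apply]

set_option maxHeartbeats 2000000 in
theorem FW_preimage_range {n m : ℕ} (F : Set (EuclideanSpace ℝ (Fin m)))
    (T : EuclideanSpace ℝ (Fin n) →ᵃ[ℝ] EuclideanSpace ℝ (Fin m))
    (hrange : F ⊆ Set.range T) (hF : IsFWSet F) : IsFWSet (T ⁻¹' F) := by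
  classical
  intro f hf hbdd
  rcases Set.eq_empty_or_nonempty (T ⁻¹' F) with hemp | ⟨xb, hxb⟩
  · exfalso
    have hFe : F = ∅ := by
      ext y
      simp only [Set.mem_empty_iff_false, iff_false]
      intro hy
      obtain ⟨x, hx⟩ := hrange hy
      have hxm : x ∈ T ⁻¹' F := by simp [Set.mem_preimage, hx, hy]
      rw [hemp] at hxm; exact hxm
    obtain ⟨x₀, hx₀, -⟩ := hF (fun _ => 0) ⟨0, 0, 0, by simp⟩ (by rw [hFe]; simp)
    rw [hFe] at hx₀; exact hx₀
  obtain ⟨m0, hm0⟩ := hbdd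
  have hmf : ∀ x ∈ T ⁻¹' F, m0 ≤ f x := fun x hx => hm0 ⟨x, hx, rfl⟩
  obtain ⟨B, l, c, hflc⟩ := hf
  set Bs := ((1:ℝ)/2) • (B + B.flip) with hBsdef
  have hBs_symm : ∀ x y, Bs x y = Bs y x := by
    intro x y; simp [hBsdef, LinearMap.add_apply, LinearMap.flip_apply]; ring
  have hBs_diag : ∀ x, Bs x x = B x x := by
    intro x; simp [hBsdef, LinearMap.add_apply, LinearMap.flip_apply]; ring
  obtain ⟨A, hAin⟩ := exists_repr' Bs
  obtain ⟨v, hv⟩ := exists_riesz' l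
  have hAsymm : ∀ s k, ⟪A s, k⟫ = ⟪A k, s⟫ := by
    intro s k
    rw [hAin k s, hAin s k, hBs_symm]
  have hA : ∀ x y, ⟪A x, y⟫ = ⟪x, A y⟫ := by
    intro x y
    rw [hAsymm x y, real_inner_comm]
  have hfA : ∀ x, f x = ⟪A x, x⟫ + ⟪v, x⟫ + c := by
    intro x
    rw [hflc, hAin x x, hv, hBs_diag]
  have hexp : ∀ s k, f (s + k) = f s + ⟪A k, k⟫ + (2*⟪A s, k⟫ + ⟪v, k⟫) := by
    intro s k
    simp only [hfA, map_add, inner_add_left, inner_add_right]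
    rw [← hAsymm s k]
    ring
  set L := T.linear with hLdef
  set K := LinearMap.ker L with hKdef
  have hTx : ∀ x, T x = L x + T 0 := by
    intro x
    have h := T.linearMap_vsub x 0
    simp only [vsub_eq_sub, sub_zero] at h
    rw [hLdef, h]
    abel
  obtain ⟨sL, hsL, -⟩ := exists_pinv' L
  set P : EuclideanSpace ℝ (Fin n) →ₗ[ℝ] EuclideanSpace ℝ (Fin n) :=
    K.subtype ∘ₗ (Submodule.orthogonalProjection K).toLinearMap with hPdef
  have hPapp : ∀ x, P x = (Submodule.orthogonalProjection K x : EuclideanSpace ℝ (Fin n)) :=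
    fun _ => rfl
  have hPmem : ∀ x, P x ∈ K := fun x => (Submodule.orthogonalProjection K x).2
  have hPid : ∀ k, k ∈ K → P k = k := by
    intro k hk; rw [hPapp]; exact Submodule.starProjection_eq_self_iff.mpr hk
  have hPsym : ∀ x y, ⟪P x, y⟫ = ⟪x, P y⟫ := by
    intro x y; rw [hPapp, hPapp]; exact Submodule.inner_starProjection_left_eq_right (K := K) x y
  have hPzero : ∀ x ∈ Kᗮ, P x = 0 := by
    intro x hx
    rw [hPapp, Submodule.orthogonalProjectionOnto_apply_of_mem_orthogonal hx]
    simp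
  set C : EuclideanSpace ℝ (Fin n) →ₗ[ℝ] EuclideanSpace ℝ (Fin n) := P ∘ₗ A ∘ₗ P with hCdef
  have hCapp : ∀ x, C x = P (A (P x)) := fun _ => rfl
  have hCsym : ∀ x y, ⟪C x, y⟫ = ⟪x, C y⟫ := by
    intro x y
    rw [hCapp, hCapp, hPsym, hA, hPsym]
  have hCinK : ∀ x k, k ∈ K → ⟪C x, k⟫ = ⟪A (P x), k⟫ := by
    intro x k hk
    rw [hCapp, hPsym, hPid k hk]
  have hACK : ∀ k, k ∈ K → ∀ k', k' ∈ K → ⟪A k, k'⟫ = ⟪C k, k'⟫ := by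
    intro k hk k' hk'
    rw [hCinK k k' hk', hPid k hk]
  have hfiber : ∀ x (k : EuclideanSpace ℝ (Fin n)), k ∈ K → x ∈ T ⁻¹' F →
      x + k ∈ T ⁻¹' F := by
    intro x k hk hx
    simp only [Set.mem_preimage] at *
    have hT : T (x + k) = T x := by
      rw [hTx (x + k), hTx x, map_add, LinearMap.mem_ker.mp hk, add_zero]
    rw [hT]; exact hx
  have hAKpos : ∀ k, k ∈ K → 0 ≤ ⟪A k, k⟫ := by
    intro k hk
    apply quad_coeff_nonneg' (b := 2*⟪A xb, k⟫ + ⟪v, k⟫) (c0 := f xb) (m := m0)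
    intro t
    have hmem : xb + t • k ∈ T ⁻¹' F := hfiber xb (t • k) (K.smul_mem t hk) hxb
    have hle := hmf _ hmem
    rw [hexp xb (t • k)] at hle
    have e1 : ⟪A (t • k), t • k⟫ = ⟪A k, k⟫ * t^2 := by
      rw [map_smul, real_inner_smul_left, real_inner_smul_right]; ring
    have e2 : ⟪A xb, t • k⟫ = t * ⟪A xb, k⟫ := real_inner_smul_right _ _ _
    have e3 : ⟪v, t • k⟫ = t * ⟪v, k⟫ := real_inner_smul_right _ _ _
    rw [e1, e2, e3] at hle
    linarith
  have hCpos : ∀ x, 0 ≤ ⟪C x, x⟫ := by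
    intro x
    have h1 : ⟪C x, x⟫ = ⟪A (P x), P x⟫ := by rw [hCapp, hPsym]
    rw [h1]; exact hAKpos _ (hPmem x)
  have hKC : Kᗮ ≤ LinearMap.ker C := by
    intro x hx
    rw [LinearMap.mem_ker, hCapp, hPzero x hx]
    simp
  have hkerCK : (LinearMap.ker C)ᗮ ≤ K := by
    have h1 : (LinearMap.ker C)ᗮ ≤ Kᗮᗮ := Submodule.orthogonal_le hKC
    rwa [Submodule.orthogonal_orthogonal] at h1
  have hrangeC := symm_orth_ker_le_range' C hCsym
  obtain ⟨Cp, hCp, hCpmem⟩ := exists_pinv' C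
  set σ : EuclideanSpace ℝ (Fin m) → EuclideanSpace ℝ (Fin n) :=
    fun y => sL (y - T 0) with hσdef
  set kst : EuclideanSpace ℝ (Fin m) → EuclideanSpace ℝ (Fin n) :=
    fun y => (-(1/2:ℝ)) • Cp (P ((2:ℝ) • A (σ y) + v)) with hkstdef
  set Φ : EuclideanSpace ℝ (Fin m) → EuclideanSpace ℝ (Fin n) :=
    fun y => σ y + kst y with hΦdef
  have hkstK : ∀ y, kst y ∈ K := fun y => K.smul_mem _ (hkerCK (hCpmem _))
  have hTσ : ∀ y, y ∈ F → T (σ y) = y := by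
    intro y hy
    obtain ⟨x, hx⟩ := hrange hy
    have hmem : y - T 0 ∈ LinearMap.range L := by
      refine ⟨x, ?_⟩
      rw [hTx x] at hx
      rw [← hx]; abel
    rw [hTx (σ y), hσdef]
    dsimp only
    rw [hsL _ hmem]
    abel
  have hΦfib : ∀ y, y ∈ F → T (Φ y) = y := by
    intro y hy
    rw [hΦdef]
    dsimp only
    rw [hTx (σ y + kst y), map_add, LinearMap.mem_ker.mp (hkstK y), add_zero, ← hTx (σ y)]
    exact hTσ y hy
  have hΦpre : ∀ y, y ∈ F → Φ y ∈ T ⁻¹' F := by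
    intro y hy
    simp only [Set.mem_preimage, hΦfib y hy]
    exact hy
  have key : ∀ y, y ∈ F → ∀ x, T x = y → f (Φ y) ≤ f x := by
    intro y hy x hxy
    set s := σ y with hs
    have hTs : T s = y := hTσ y hy
    set wv := P ((2:ℝ) • A s + v) with hw
    have hzin : ∀ k, k ∈ K → ⟪wv, k⟫ = 2*⟪A s, k⟫ + ⟪v, k⟫ := by
      intro k hk
      rw [hw, hPsym, hPid k hk, inner_add_left, real_inner_smul_left]
    have hsmem : s ∈ T ⁻¹' F := by
      simp only [Set.mem_preimage, hTs]; exact hy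
    have hwker : wv ∈ (LinearMap.ker C)ᗮ := by
      rw [Submodule.mem_orthogonal]
      intro u hu
      have hkK : P u ∈ K := hPmem u
      have hCk : C (P u) = 0 := by
        have h1 : C (P u) = C u := by
          rw [hCapp, hCapp, hPid (P u) (hPmem u)]
        rw [h1]; exact LinearMap.mem_ker.mp hu
      have hAkk : ⟪A (P u), P u⟫ = (0:ℝ) := by
        rw [hACK _ hkK _ hkK, hCk]; simp
      have hlin : 2*⟪A s, P u⟫ + ⟪v, P u⟫ = 0 := by
        apply lin_coeff_zero' (c0 := f s) (m := m0)
        intro t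
        have hmem := hfiber s (t • P u) (K.smul_mem t hkK) hsmem
        have hle := hmf _ hmem
        rw [hexp s (t • P u)] at hle
        have e1 : ⟪A (t • P u), t • P u⟫ = (0:ℝ) := by
          rw [map_smul, real_inner_smul_left, real_inner_smul_right, hAkk]; ring
        have e2 : ⟪A s, t • P u⟫ = t * ⟪A s, P u⟫ := real_inner_smul_right _ _ _
        have e3 : ⟪v, t • P u⟫ = t * ⟪v, P u⟫ := real_inner_smul_right _ _ _
        rw [e1, e2, e3] at hle
        linarith
      have hfin : ⟪wv, u⟫ = 0 := by
        rw [hw, hPsym]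
        have := hzin (P u) hkK
        rw [hw, hPsym, hPid _ (hPmem u)] at this
        rw [this]
        exact hlin
      rw [real_inner_comm]; exact hfin
    have hwrange : wv ∈ LinearMap.range C := hrangeC hwker
    have hCkst : C (kst y) = (-(1/2:ℝ)) • wv := by
      rw [hkstdef]
      dsimp only
      rw [map_smul, hCp _ hwrange]
    set k := x - s with hkd
    have hkK : k ∈ K := by
      rw [hKdef, LinearMap.mem_ker, map_sub]
      have h1 : L x = T x - T 0 := by rw [hTx x]; abel
      have h2 : L s = T s - T 0 := by rw [hTx s]; abel
      rw [h1, h2, hxy, hTs, sub_self]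
    set d := k - kst y with hdd
    have hdK : d ∈ K := K.sub_mem hkK (hkstK y)
    have hxeq : x = (s + kst y) + d := by rw [hdd, hkd]; abel
    have hΦy : Φ y = s + kst y := rfl
    have hlin0 : 2*⟪A (s + kst y), d⟫ + ⟪v, d⟫ = 0 := by
      rw [map_add, inner_add_left]
      have h1 : ⟪A (kst y), d⟫ = ⟪C (kst y), d⟫ := hACK _ (hkstK y) _ hdK
      have h2 : ⟪C (kst y), d⟫ = (-(1/2:ℝ)) * ⟪wv, d⟫ := by
        rw [hCkst, real_inner_smul_left]
      have h3 : ⟪wv, d⟫ = 2*⟪A s, d⟫ + ⟪v, d⟫ := hzin d hdK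
      linarith
    have hquad : 0 ≤ ⟪A d, d⟫ := by
      rw [hACK d hdK d hdK]; exact hCpos d
    have hfx : f x = f (s + kst y) + ⟪A d, d⟫ + (2*⟪A (s + kst y), d⟫ + ⟪v, d⟫) := by
      rw [hxeq]; exact hexp (s + kst y) d
    rw [hΦy]
    rw [hfx, hlin0]
    linarith
  set g : EuclideanSpace ℝ (Fin m) → ℝ := fun y => f (Φ y) with hgdef
  set G : EuclideanSpace ℝ (Fin m) →ₗ[ℝ] EuclideanSpace ℝ (Fin n) :=
    sL - (Cp ∘ₗ P ∘ₗ A ∘ₗ sL) with hGdef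
  set dv : EuclideanSpace ℝ (Fin n) :=
    -(sL (T 0)) + (-(1/2:ℝ)) • Cp (P (v - (2:ℝ) • A (sL (T 0)))) with hdvdef
  have hΦG : ∀ y, Φ y = G y + dv := by
    intro y
    have hG : G y = sL y - Cp (P (A (sL y))) := by
      rw [hGdef]; simp only [LinearMap.sub_apply, LinearMap.comp_apply]
    have h1 : σ y = sL y - sL (T 0) := by
      rw [show σ y = sL (y - T 0) from rfl, map_sub]
    have h3 : (2:ℝ) • A (σ y) + v =
        ((2:ℝ) • A (sL y)) + (v - (2:ℝ) • A (sL (T 0))) := by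
      rw [h1, map_sub, smul_sub]; abel
    have h4 : kst y = (-(1/2:ℝ)) • (Cp (P ((2:ℝ) • A (sL y)))) +
        (-(1/2:ℝ)) • Cp (P (v - (2:ℝ) • A (sL (T 0)))) := by
      rw [show kst y = (-(1/2:ℝ)) • Cp (P ((2:ℝ) • A (σ y) + v)) from rfl,
        h3, map_add, map_add, smul_add]
    have h5 : (-(1/2:ℝ)) • (Cp (P ((2:ℝ) • A (sL y)))) = -(Cp (P (A (sL y)))) := by
      rw [map_smul, map_smul, smul_smul]
      norm_num
    rw [hΦdef]
    dsimp only
    rw [h1, h4, h5, hG, hdvdef]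
    abel
  have hgq : IsQuadratic g := by
    have hge : g = fun y => f (G y + dv) := by
      funext y
      rw [hgdef]
      dsimp only
      rw [hΦG y]
    rw [hge]
    exact IsQuadratic.comp_affine' ⟨B, l, c, hflc⟩ G dv
  have hgbdd : BddBelow (g '' F) := by
    refine ⟨m0, ?_⟩
    rintro z ⟨y, hy, rfl⟩
    exact hmf _ (hΦpre y hy)
  obtain ⟨y₀, hy₀F, hy₀min⟩ := hF g hgq hgbdd
  refine ⟨Φ y₀, hΦpre y₀ hy₀F, ?_⟩
  intro x hx
  have hTxF : T x ∈ F := hx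
  have h1 : g y₀ ≤ g (T x) := hy₀min (T x) hTxF
  have h2 : f (Φ (T x)) ≤ f x := key (T x) hTxF x rfl
  have h0 : f (Φ y₀) = g y₀ := rfl
  have h3 : g (T x) = f (Φ (T x)) := rfl
  linarith
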